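/- Let b = (b_1, …, b_n) and c = (c_1, …, c_n) be real vectors with b_i ≥ c_i for all i, and let Y and Z be random vectors having the permutation distributions on b and on c, respectively. Then for any two disjoint proper subsets I, L of {1,…,n} and any x_I ∈ ℝ^{|I|} such that both conditioning events have positive probability, [Z_L | Z_I ≥ x_I] ≤_st [Y_L | Y_I ≥ x_I]. -/

import Mathlib

open scoped Classical
open Finset

noncomputable section

/-- Probability of the event `A` on a finite sample space with weights `w`. -/
def Pr {Ω : Type*} [Fintype Ω] (w : Ω → ℝ) (A : Ω → Prop) : ℝ :=
  ∑ ω : Ω, if A ω then w ω else 0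

/-- Expectation of `f` on a finite sample space with weights `w`. -/
def Expec {Ω : Type*} [Fintype Ω] (w : Ω → ℝ) (f : Ω → ℝ) : ℝ :=
  ∑ ω : Ω, w ω * f ω

/-- Conditional expectation of `f` given the event `A` under weights `w`. -/
def CExp {Ω : Type*} [Fintype Ω] (w : Ω → ℝ) (A : Ω → Prop) (f : Ω → ℝ) : ℝ :=
  (∑ ω : Ω, if A ω then w ω * f ω else 0) / Pr w A

/-- `[X_I | A] ≤_st [X_I | B]` : the conditional distribution of the subvector `X_I`
given the event `A` is dominated, in the usual stochastic order, by the conditional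
distribution of `X_I` given `B`; i.e. conditional expectations of every bounded
coordinatewise increasing function compare. -/
def CondSubvecStochLE {Ω : Type*} [Fintype Ω] {n : ℕ} (w : Ω → ℝ)
    (X : Ω → Fin n → ℝ) (I : Finset (Fin n)) (A B : Ω → Prop) : Prop :=
  ∀ φ : ({i : Fin n // i ∈ I} → ℝ) → ℝ, Monotone φ → (∃ C, ∀ v, |φ v| ≤ C) →
    CExp w A (fun ω => φ fun i => X ω i.1) ≤ CExp w B (fun ω => φ fun i => X ω i.1)

/-- Negative regression dependence: `[X_I | X_J = x_J] ≥_st [X_I | X_J = x_J*]`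
whenever `x_J ≤ x_J*` componentwise and both conditioning events have
positive probability. -/
def IsNRD {Ω : Type*} [Fintype Ω] {n : ℕ} (w : Ω → ℝ) (X : Ω → Fin n → ℝ) : Prop :=
  ∀ I J : Finset (Fin n), Disjoint I J → ∀ x y : Fin n → ℝ, (∀ j ∈ J, x j ≤ y j) →
    0 < Pr w (fun ω => ∀ j ∈ J, X ω j = x j) →
    0 < Pr w (fun ω => ∀ j ∈ J, X ω j = y j) →
    CondSubvecStochLE w X I (fun ω => ∀ j ∈ J, X ω j = y j)
      (fun ω => ∀ j ∈ J, X ω j = x j)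

/-- Negative left-tail dependence: `[X_I | X_J ≤ x_J] ≥_st [X_I | X_J ≤ x_J*]`
whenever `x_J ≤ x_J*` componentwise and both conditioning events have
positive probability. -/
def IsNLTD {Ω : Type*} [Fintype Ω] {n : ℕ} (w : Ω → ℝ) (X : Ω → Fin n → ℝ) : Prop :=
  ∀ I J : Finset (Fin n), Disjoint I J → ∀ x y : Fin n → ℝ, (∀ j ∈ J, x j ≤ y j) →
    0 < Pr w (fun ω => ∀ j ∈ J, X ω j ≤ x j) →
    0 < Pr w (fun ω => ∀ j ∈ J, X ω j ≤ y j) →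
    CondSubvecStochLE w X I (fun ω => ∀ j ∈ J, X ω j ≤ y j)
      (fun ω => ∀ j ∈ J, X ω j ≤ x j)

/-- Negative right-tail dependence: `[X_I | X_J > x_J] ≥_st [X_I | X_J > x_J*]`
whenever `x_J ≤ x_J*` componentwise and both conditioning events have
positive probability. -/
def IsNRTD {Ω : Type*} [Fintype Ω] {n : ℕ} (w : Ω → ℝ) (X : Ω → Fin n → ℝ) : Prop :=
  ∀ I J : Finset (Fin n), Disjoint I J → ∀ x y : Fin n → ℝ, (∀ j ∈ J, x j ≤ y j) →
    0 < Pr w (fun ω => ∀ j ∈ J, x j < X ω j) →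
    0 < Pr w (fun ω => ∀ j ∈ J, y j < X ω j) →
    CondSubvecStochLE w X I (fun ω => ∀ j ∈ J, y j < X ω j)
      (fun ω => ∀ j ∈ J, x j < X ω j)

/-- Negative association on a finite weighted sample space:
`Cov(ψ₁(X_{A₁}), ψ₂(X_{A₂})) ≤ 0` for disjoint `A₁, A₂` and bounded
coordinatewise increasing `ψ₁, ψ₂`. -/
def IsNAfin {Ω : Type*} [Fintype Ω] {n : ℕ} (w : Ω → ℝ) (X : Ω → Fin n → ℝ) : Prop :=
  ∀ A₁ A₂ : Finset (Fin n), Disjoint A₁ A₂ →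
    ∀ ψ₁ : ({i : Fin n // i ∈ A₁} → ℝ) → ℝ, ∀ ψ₂ : ({i : Fin n // i ∈ A₂} → ℝ) → ℝ,
      Monotone ψ₁ → Monotone ψ₂ → (∃ C, ∀ v, |ψ₁ v| ≤ C) → (∃ C, ∀ v, |ψ₂ v| ≤ C) →
      Expec w (fun ω => (ψ₁ fun i => X ω i.1) * (ψ₂ fun i => X ω i.1))
        ≤ Expec w (fun ω => ψ₁ fun i => X ω i.1) * Expec w (fun ω => ψ₂ fun i => X ω i.1)

/-- The uniform distribution on the permutations of `Fin n`. -/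
def unifPerm (n : ℕ) : Equiv.Perm (Fin n) → ℝ := fun _ => (Nat.factorial n : ℝ)⁻¹

/-- The random vector with the permutation distribution on `a`:
`X = (a_{σ(1)}, …, a_{σ(n)})` for a uniformly random permutation `σ`. -/
def permVec {n : ℕ} (a : Fin n → ℝ) (σ : Equiv.Perm (Fin n)) : Fin n → ℝ :=
  fun i => a (σ i)

namespace Perm4Aux

variable {n : ℕ}

/-- The finset of permutations pinned to `f` on `F` and satisfying the
right-tail constraints `x i ≤ c (σ i)` for `i ∈ I`. -/
def Ev (c : Fin n → ℝ) (F : Finset (Fin n)) (f : Fin n → Fin n)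
    (I : Finset (Fin n)) (x : Fin n → ℝ) : Finset (Equiv.Perm (Fin n)) :=
  Finset.univ.filter fun σ => (∀ p ∈ F, σ p = f p) ∧ ∀ i ∈ I, x i ≤ c (σ i)

lemma mem_Ev {c : Fin n → ℝ} {F : Finset (Fin n)} {f : Fin n → Fin n}
    {I : Finset (Fin n)} {x : Fin n → ℝ} {σ : Equiv.Perm (Fin n)} :
    σ ∈ Ev c F f I x ↔ (∀ p ∈ F, σ p = f p) ∧ ∀ i ∈ I, x i ≤ c (σ i) := by
  simp [Ev]

theorem ML (c b : Fin n → ℝ) (L : Finset (Fin n)) (x : Fin n → ℝ)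
    (φ : ({i : Fin n // i ∈ L} → ℝ) → ℝ) (hφ : Monotone φ) :
    ∀ I : Finset (Fin n), ∀ (F : Finset (Fin n)) (f g : Fin n → Fin n)
      (ρ : Equiv.Perm (Fin n)) (k0 : Fin n),
      Disjoint F I → Disjoint I L → Disjoint F L →
      (∀ p ∈ F, ρ (f p) = g p) →
      (∀ p ∈ F, f p ≠ k0) →
      (∀ w, (∀ p ∈ F, f p ≠ w) → w ≠ k0 → ρ w = w ∧ b w = c w) →
      c k0 ≤ b (ρ k0) →
      (Ev c F f I x).Nonempty →
      (Ev b F g I x).Nonempty ∧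
        (∑ σ ∈ Ev c F f I x, φ fun i => c (σ i.1)) / (Ev c F f I x).card
          ≤ (∑ σ ∈ Ev b F g I x, φ fun i => b (σ i.1)) / (Ev b F g I x).card := by
  intro I
  induction I using Finset.strongInduction with
  | _ I ih =>
  intro F f g ρ k0 hFI hIL hFL hρf hfk hfix hck hAne
  set A := Ev c F f I x with hA
  set B := Ev b F g I x with hB
  -- if σ is pinned to f on F and q ∉ F, then σ q avoids the pinned values
  have pins_ne : ∀ (σ : Equiv.Perm (Fin n)), (∀ p ∈ F, σ p = f p) →
      ∀ q, q ∉ F → ∀ p ∈ F, f p ≠ σ q := by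
    intro σ hσ q hq p hp hfp
    have hpq : σ p = σ q := by rw [hσ p hp, hfp]
    exact hq (σ.injective hpq ▸ hp)
  have val_le : ∀ (σ : Equiv.Perm (Fin n)), (∀ p ∈ F, σ p = f p) →
      ∀ q, q ∉ F → c (σ q) ≤ b (ρ (σ q)) := by
    intro σ hσ q hq
    by_cases h : σ q = k0
    · rw [h]; exact hck
    · obtain ⟨h1, h2⟩ := hfix (σ q) (pins_ne σ hσ q hq) h
      rw [h1, h2]
  have hTmem : ∀ σ ∈ A, ρ * σ ∈ B := by
    intro σ hσ
    rw [hA, mem_Ev] at hσ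
    rw [hB, mem_Ev]
    refine ⟨fun p hp => ?_, fun i hi => ?_⟩
    · simp only [Equiv.Perm.mul_apply]
      rw [hσ.1 p hp, hρf p hp]
    · have hiF : i ∉ F := fun h => Finset.disjoint_left.mp hFI h hi
      simp only [Equiv.Perm.mul_apply]
      exact le_trans (hσ.2 i hi) (val_le σ hσ.1 i hiF)
  have hφle : ∀ σ ∈ A, (φ fun i => c (σ i.1)) ≤ φ fun i => b ((ρ * σ) i.1) := by
    intro σ hσ
    rw [hA, mem_Ev] at hσ
    apply hφ
    intro i
    simp only [Equiv.Perm.mul_apply]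
    exact val_le σ hσ.1 i.1 (fun h => Finset.disjoint_left.mp hFL h i.2)
  set TA := A.image (fun σ => ρ * σ) with hTA
  have hmulinj : Function.Injective (fun σ : Equiv.Perm (Fin n) => ρ * σ) :=
    fun σ τ h => by simpa using mul_left_cancel h
  have hTAB : TA ⊆ B := by
    intro σ' hσ'
    rw [hTA, Finset.mem_image] at hσ'
    obtain ⟨σ, hσ, rfl⟩ := hσ'
    exact hTmem σ hσ
  have hTAcard : TA.card = A.card := Finset.card_image_of_injective _ hmulinj
  have hTAsum : (∑ σ ∈ A, φ fun i => c (σ i.1)) ≤ ∑ σ' ∈ TA, φ fun i => b (σ' i.1) := by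
    rw [hTA, Finset.sum_image (fun x _ y _ h => hmulinj h)]
    exact Finset.sum_le_sum hφle
  have hcover : ∀ σ' ∈ B, σ' ∉ TA → ∃ i ∈ I, c k0 < x i ∧ σ' i = ρ k0 := by
    intro σ' hσ' hnot
    rw [hB, mem_Ev] at hσ'
    have hpins : ∀ p ∈ F, (ρ⁻¹ * σ') p = f p := by
      intro p hp
      simp only [Equiv.Perm.mul_apply]
      rw [hσ'.1 p hp, ← hρf p hp]
      simp
    by_cases hc : ∀ i ∈ I, x i ≤ c ((ρ⁻¹ * σ') i)
    · exfalso
      apply hnot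
      rw [hTA, Finset.mem_image]
      refine ⟨ρ⁻¹ * σ', by rw [hA, mem_Ev]; exact ⟨hpins, hc⟩, by group⟩
    · push_neg at hc
      obtain ⟨i, hi, hlt⟩ := hc
      have hiF : i ∉ F := fun h => Finset.disjoint_left.mp hFI h hi
      have hk : (ρ⁻¹ * σ') i = k0 := by
        by_contra hne
        obtain ⟨h1, h2⟩ := hfix _ (pins_ne _ hpins i hiF) hne
        have heq : σ' i = (ρ⁻¹ * σ') i := by
          conv_lhs => rw [show σ' i = ρ ((ρ⁻¹ * σ') i) by simp [Equiv.Perm.mul_apply]]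
          rw [h1]
        have hxi := hσ'.2 i hi
        rw [heq, h2] at hxi
        exact absurd hxi (not_le.mpr hlt)
      rw [hk] at hlt
      refine ⟨i, hi, hlt, ?_⟩
      rw [← hk]
      simp [Equiv.Perm.mul_apply]
  set J := I.filter (fun i => c k0 < x i) with hJ
  set Di := fun i => B.filter (fun σ' => σ' i = ρ k0) with hDi
  have hDiB : ∀ i, Di i ⊆ B := fun i => Finset.filter_subset _ _
  have hpart : B = TA ∪ J.biUnion Di := by
    apply Finset.Subset.antisymm
    · intro σ' hσ'
      by_cases h : σ' ∈ TA
      · exact Finset.mem_union_left _ h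
      · obtain ⟨i, hi, hxi, hval⟩ := hcover σ' hσ' h
        exact Finset.mem_union_right _ (Finset.mem_biUnion.mpr
          ⟨i, Finset.mem_filter.mpr ⟨hi, hxi⟩, Finset.mem_filter.mpr ⟨hσ', hval⟩⟩)
    · refine Finset.union_subset hTAB ?_
      intro σ' hσ'
      rw [Finset.mem_biUnion] at hσ'
      obtain ⟨i, _, hσi⟩ := hσ'
      exact hDiB i hσi
  have hdisjTA : Disjoint TA (J.biUnion Di) := by
    rw [Finset.disjoint_left]
    intro σ' hσ' hσ''
    rw [Finset.mem_biUnion] at hσ''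
    obtain ⟨i, hiJ, hσi⟩ := hσ''
    rw [hTA, Finset.mem_image] at hσ'
    obtain ⟨σ, hσ, rfl⟩ := hσ'
    have hik : σ i = k0 :=
      ρ.injective (by simpa [Equiv.Perm.mul_apply] using (Finset.mem_filter.mp hσi).2)
    rw [hJ, Finset.mem_filter] at hiJ
    rw [hA, mem_Ev] at hσ
    have hxc := hσ.2 i hiJ.1
    rw [hik] at hxc
    exact absurd hiJ.2 (not_lt.mpr hxc)
  have hpairdisj : ∀ i ∈ J, ∀ j ∈ J, i ≠ j → Disjoint (Di i) (Di j) := by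
    intro i _ j _ hij
    rw [Finset.disjoint_left]
    intro σ' h1 h2
    exact hij (σ'.injective ((Finset.mem_filter.mp h1).2.trans
      (Finset.mem_filter.mp h2).2.symm))
  set q : ℝ := (∑ σ ∈ A, φ fun i => c (σ i.1)) / A.card with hq
  have hAcardpos : (0:ℝ) < A.card := by exact_mod_cast Finset.card_pos.mpr hAne
  have hkey : ∀ i ∈ J, ((Di i).card : ℝ) * q ≤ ∑ σ' ∈ Di i, φ fun i' => b (σ' i'.1) := by
    intro i hiJ
    rw [hJ, Finset.mem_filter] at hiJ
    obtain ⟨hiI, hxi⟩ := hiJ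
    have hiF : i ∉ F := fun h => Finset.disjoint_left.mp hFI h hiI
    rcases Finset.eq_empty_or_nonempty (Di i) with hemp | hne
    · rw [hemp]; simp
    · obtain ⟨σ₁, hσ₁⟩ := hne
      have hσ₁' := Finset.mem_filter.mp hσ₁
      have hxb : x i ≤ b (ρ k0) := by
        have h := (mem_Ev.mp hσ₁'.1).2 i hiI
        rwa [hσ₁'.2] at h
      have hDieq : Di i = Ev b (insert i F) (Function.update g i (ρ k0)) (I.erase i) x := by
        ext σ'
        simp only [hDi, Finset.mem_filter, hB, mem_Ev]
        constructor
        · rintro ⟨⟨hp, hcst⟩, hval⟩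
          refine ⟨fun p hp' => ?_, fun i' hi' => hcst i' (Finset.mem_of_mem_erase hi')⟩
          rcases Finset.mem_insert.mp hp' with rfl | hpF
          · rw [Function.update_self]; exact hval
          · rw [Function.update_of_ne (fun h : p = i => Finset.disjoint_left.mp hFI (h ▸ hpF) hiI)]
            exact hp p hpF
        · rintro ⟨hp, hcst⟩
          have hvi : σ' i = ρ k0 := by
            have h := hp i (Finset.mem_insert_self i F)
            rwa [Function.update_self] at h
          refine ⟨⟨fun p hpF => ?_, fun i' hi' => ?_⟩, hvi⟩
          · have hpi : p ≠ i := fun h => Finset.disjoint_left.mp hFI (h ▸ hpF) hiI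
            have h := hp p (Finset.mem_insert_of_mem hpF)
            rwa [Function.update_of_ne hpi] at h
          · by_cases h : i' = i
            · subst h; rw [hvi]; exact hxb
            · exact hcst i' (Finset.mem_erase.mpr ⟨h, hi'⟩)
      set avgD := (∑ σ' ∈ Di i, φ fun i' => b (σ' i'.1)) / ((Di i).card : ℝ) with havgD
      have hDicardpos : (0:ℝ) < (Di i).card := by
        exact_mod_cast Finset.card_pos.mpr ⟨σ₁, hσ₁⟩
      have hAw : ∀ w : Fin n, (A.filter fun σ => σ i = w).Nonempty →
          (∑ σ ∈ A.filter (fun σ => σ i = w), φ fun i' => c (σ i'.1))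
            ≤ ((A.filter (fun σ => σ i = w)).card : ℝ) * avgD := by
        intro w hwne
        obtain ⟨σ₀, hσ₀⟩ := hwne
        have hσ₀' := Finset.mem_filter.mp hσ₀
        have hσ₀A := mem_Ev.mp hσ₀'.1
        have hWx : x i ≤ c w := by rw [← hσ₀'.2]; exact hσ₀A.2 i hiI
        have hWk : w ≠ k0 := fun h => absurd (h ▸ hWx) (not_le.mpr hxi)
        have hWf : ∀ p ∈ F, f p ≠ w := by
          intro p hp
          rw [← hσ₀'.2]
          exact pins_ne σ₀ hσ₀A.1 i hiF p hp
        have hAweq : A.filter (fun σ => σ i = w)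
            = Ev c (insert i F) (Function.update f i w) (I.erase i) x := by
          ext σ
          simp only [Finset.mem_filter, hA, mem_Ev]
          constructor
          · rintro ⟨⟨hp, hcst⟩, hval⟩
            refine ⟨fun p hp' => ?_, fun i' hi' => hcst i' (Finset.mem_of_mem_erase hi')⟩
            rcases Finset.mem_insert.mp hp' with rfl | hpF
            · rw [Function.update_self]; exact hval
            · rw [Function.update_of_ne (fun h : p = i => Finset.disjoint_left.mp hFI (h ▸ hpF) hiI)]
              exact hp p hpF
          · rintro ⟨hp, hcst⟩
            have hvi : σ i = w := by
              have h := hp i (Finset.mem_insert_self i F)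
              rwa [Function.update_self] at h
            refine ⟨⟨fun p hpF => ?_, fun i' hi' => ?_⟩, hvi⟩
            · have hpi : p ≠ i := fun h => Finset.disjoint_left.mp hFI (h ▸ hpF) hiI
              have h := hp p (Finset.mem_insert_of_mem hpF)
              rwa [Function.update_of_ne hpi] at h
            · by_cases h : i' = i
              · subst h; rw [hvi]; exact hWx
              · exact hcst i' (Finset.mem_erase.mpr ⟨h, hi'⟩)
        -- hypotheses for the induction
        have hρw : ρ w = w ∧ b w = c w := hfix w hWf hWk
        have hsub := ih (I.erase i) (Finset.erase_ssubset hiI) (insert i F)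
          (Function.update f i w) (Function.update g i (ρ k0))
          (ρ * Equiv.swap k0 w) k0
          (by
            rw [Finset.disjoint_left]
            intro p hp hpI
            rcases Finset.mem_insert.mp hp with rfl | hpF
            · exact (Finset.mem_erase.mp hpI).1 rfl
            · exact Finset.disjoint_left.mp hFI hpF (Finset.mem_of_mem_erase hpI))
          (Finset.disjoint_of_subset_left (Finset.erase_subset _ _) hIL)
          (by
            rw [Finset.disjoint_left]
            intro p hp hpL
            rcases Finset.mem_insert.mp hp with rfl | hpF
            · exact Finset.disjoint_left.mp hIL hiI hpL
            · exact Finset.disjoint_left.mp hFL hpF hpL)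
          (by
            intro p hp
            rcases Finset.mem_insert.mp hp with rfl | hpF
            · rw [Function.update_self, Function.update_self]
              simp [Equiv.Perm.mul_apply, Equiv.swap_apply_right]
            · have hpi : p ≠ i := fun h => Finset.disjoint_left.mp hFI (h ▸ hpF) hiI
              rw [Function.update_of_ne hpi, Function.update_of_ne hpi]
              simp only [Equiv.Perm.mul_apply]
              rw [Equiv.swap_apply_of_ne_of_ne (hfk p hpF) (hWf p hpF)]
              exact hρf p hpF
          )
          (by
            intro p hp
            rcases Finset.mem_insert.mp hp with rfl | hpF
            · rw [Function.update_self]; exact hWk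
            · have hpi : p ≠ i := fun h => Finset.disjoint_left.mp hFI (h ▸ hpF) hiI
              rw [Function.update_of_ne hpi]; exact hfk p hpF)
          (by
            intro w' hw' hw'k
            have hw'w : w' ≠ w := by
              intro h
              have := hw' i (Finset.mem_insert_self i F)
              rw [Function.update_self] at this
              exact this h.symm
            have hw'F : ∀ p ∈ F, f p ≠ w' := by
              intro p hpF
              have hpi : p ≠ i := fun h => Finset.disjoint_left.mp hFI (h ▸ hpF) hiI
              have := hw' p (Finset.mem_insert_of_mem hpF)
              rwa [Function.update_of_ne hpi] at this
            obtain ⟨e1, e2⟩ := hfix w' hw'F hw'k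
            refine ⟨?_, e2⟩
            simp only [Equiv.Perm.mul_apply]
            rw [Equiv.swap_apply_of_ne_of_ne hw'k hw'w]
            exact e1)
          (by
            simp only [Equiv.Perm.mul_apply, Equiv.swap_apply_left]
            rw [hρw.1, hρw.2]
            exact le_of_lt (lt_of_lt_of_le hxi hWx))
          (by rw [← hAweq]; exact ⟨σ₀, hσ₀⟩)
        rw [← hAweq, ← hDieq] at hsub
        have hle := hsub.2
        have hAwpos : (0:ℝ) < ((A.filter (fun σ => σ i = w)).card : ℝ) := by
          exact_mod_cast Finset.card_pos.mpr ⟨σ₀, hσ₀⟩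
        have h2 := (div_le_iff₀ hAwpos).mp hle
        rw [mul_comm]
        exact h2
      have hfib : ∑ w ∈ Finset.univ, ∑ σ ∈ A.filter (fun σ => σ i = w),
          (φ fun i' => c (σ i'.1)) = ∑ σ ∈ A, φ fun i' => c (σ i'.1) :=
        Finset.sum_fiberwise_of_maps_to (fun σ _ => Finset.mem_univ (σ i)) _
      have hcardfibN : A.card = ∑ w ∈ Finset.univ, (A.filter (fun σ => σ i = w)).card :=
        Finset.card_eq_sum_card_fiberwise (fun σ _ => Finset.mem_univ (σ i))
      have hsumA : (∑ σ ∈ A, φ fun i' => c (σ i'.1)) ≤ (A.card : ℝ) * avgD := by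
        rw [← hfib]
        calc (∑ w ∈ Finset.univ, ∑ σ ∈ A.filter (fun σ => σ i = w), φ fun i' => c (σ i'.1))
            ≤ ∑ w ∈ Finset.univ, ((A.filter (fun σ => σ i = w)).card : ℝ) * avgD := by
              apply Finset.sum_le_sum
              intro w _
              rcases Finset.eq_empty_or_nonempty (A.filter (fun σ => σ i = w)) with he | hne2
              · rw [he]; simp
              · exact hAw w hne2
          _ = (A.card : ℝ) * avgD := by
              rw [← Finset.sum_mul]
              congr 1
              rw [hcardfibN]
              push_cast
              rfl
      have hqle : q ≤ avgD := by
        rw [hq, div_le_iff₀ hAcardpos, mul_comm]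
        exact hsumA
      calc ((Di i).card : ℝ) * q ≤ ((Di i).card : ℝ) * avgD :=
            mul_le_mul_of_nonneg_left hqle (Nat.cast_nonneg _)
        _ = ∑ σ' ∈ Di i, φ fun i' => b (σ' i'.1) := by
            rw [havgD, mul_comm, div_mul_cancel₀ _ (ne_of_gt hDicardpos)]
  obtain ⟨σa, hσa⟩ := hAne
  have hBne : B.Nonempty := ⟨ρ * σa, hTmem σa hσa⟩
  refine ⟨hBne, ?_⟩
  have hBcardpos : (0:ℝ) < B.card := by exact_mod_cast Finset.card_pos.mpr hBne
  show q ≤ _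
  rw [le_div_iff₀ hBcardpos]
  have hsumsplit : (∑ σ' ∈ B, φ fun i' => b (σ' i'.1))
      = (∑ σ' ∈ TA, φ fun i' => b (σ' i'.1))
        + ∑ i ∈ J, ∑ σ' ∈ Di i, φ fun i' => b (σ' i'.1) := by
    rw [hpart, Finset.sum_union hdisjTA,
      Finset.sum_biUnion (fun i hi j hj hij => hpairdisj i hi j hj hij)]
  have hcardsplit : (B.card : ℝ) = (A.card : ℝ) + ∑ i ∈ J, ((Di i).card : ℝ) := by
    rw [hpart, Finset.card_union_of_disjoint hdisjTA, Finset.card_biUnion hpairdisj, hTAcard]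
    push_cast
    ring
  have hq_mulA : q * (A.card : ℝ) = ∑ σ ∈ A, φ fun i => c (σ i.1) :=
    div_mul_cancel₀ _ (ne_of_gt hAcardpos)
  calc q * (B.card : ℝ) = q * (A.card : ℝ) + ∑ i ∈ J, q * ((Di i).card : ℝ) := by
        rw [hcardsplit, mul_add, Finset.mul_sum]
    _ ≤ (∑ σ' ∈ TA, φ fun i' => b (σ' i'.1))
        + ∑ i ∈ J, ∑ σ' ∈ Di i, φ fun i' => b (σ' i'.1) := by
        apply add_le_add
        · rw [hq_mulA]; exact hTAsum
        · refine Finset.sum_le_sum fun i hi => ?_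
          rw [mul_comm]
          exact hkey i hi
    _ = ∑ σ' ∈ B, φ fun i' => b (σ' i'.1) := hsumsplit.symm

lemma Pr_eq_card {n : ℕ} (A : Equiv.Perm (Fin n) → Prop)
    (E : Finset (Equiv.Perm (Fin n))) (hE : ∀ σ, σ ∈ E ↔ A σ) :
    Pr (unifPerm n) A = (E.card : ℝ) * ((Nat.factorial n : ℝ))⁻¹ := by
  have hEeq : Finset.univ.filter A = E := by
    ext σ; simp [hE]
  unfold Pr unifPerm
  rw [← Finset.sum_filter, hEeq, Finset.sum_const, nsmul_eq_mul]

lemma CExp_eq_avg {n : ℕ} (A : Equiv.Perm (Fin n) → Prop)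
    (E : Finset (Equiv.Perm (Fin n))) (hE : ∀ σ, σ ∈ E ↔ A σ)
    (f : Equiv.Perm (Fin n) → ℝ) :
    CExp (unifPerm n) A f = (∑ σ ∈ E, f σ) / (E.card : ℝ) := by
  have hEeq : Finset.univ.filter A = E := by
    ext σ; simp [hE]
  have h : ((Nat.factorial n : ℝ))⁻¹ ≠ 0 := by
    apply inv_ne_zero
    exact_mod_cast Nat.factorial_ne_zero n
  unfold CExp
  rw [Pr_eq_card A E hE]
  simp only [unifPerm]
  rw [← Finset.sum_filter, hEeq, ← Finset.mul_sum, mul_comm (E.card : ℝ) _,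
    mul_div_mul_left _ _ h]

lemma pos_nonempty {n : ℕ} {A : Equiv.Perm (Fin n) → Prop}
    {E : Finset (Equiv.Perm (Fin n))} (hE : ∀ σ, σ ∈ E ↔ A σ)
    (h : 0 < Pr (unifPerm n) A) : E.Nonempty := by
  rw [Pr_eq_card A E hE] at h
  by_contra he
  rw [Finset.not_nonempty_iff_eq_empty] at he
  rw [he] at h
  simp at h

end Perm4Aux

/-- If `Y`, `Z` have the permutation distributions on `b ≥ c`
(componentwise), then `[Z_L | Z_I ≥ x_I] ≤_st [Y_L | Y_I ≥ x_I]` for disjoint proper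
subsets `I, L` whenever both conditioning events have positive probability. -/
theorem permutation_right_tail_comparison (n : ℕ) (b c : Fin n → ℝ)
    (hbc : ∀ i, c i ≤ b i) (I L : Finset (Fin n)) (hIL : Disjoint I L)
    (hI : I ≠ Finset.univ) (hL : L ≠ Finset.univ) (x : Fin n → ℝ)
    (hposY : 0 < Pr (unifPerm n) fun σ => ∀ i ∈ I, x i ≤ permVec b σ i)
    (hposZ : 0 < Pr (unifPerm n) fun σ => ∀ i ∈ I, x i ≤ permVec c σ i) :
    ∀ φ : ({i : Fin n // i ∈ L} → ℝ) → ℝ, Monotone φ → (∃ C, ∀ v, |φ v| ≤ C) →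
      CExp (unifPerm n) (fun σ => ∀ i ∈ I, x i ≤ permVec c σ i)
          (fun σ => φ fun i => permVec c σ i.1)
        ≤ CExp (unifPerm n) (fun σ => ∀ i ∈ I, x i ≤ permVec b σ i)
          (fun σ => φ fun i => permVec b σ i.1) := by
  intro φ hφ _
  have hEc : ∀ σ : Equiv.Perm (Fin n),
      σ ∈ Perm4Aux.Ev c ∅ id I x ↔ ∀ i ∈ I, x i ≤ permVec c σ i := by
    intro σ; simp [Perm4Aux.Ev, permVec]
  have hEb : ∀ σ : Equiv.Perm (Fin n),
      σ ∈ Perm4Aux.Ev b ∅ id I x ↔ ∀ i ∈ I, x i ≤ permVec b σ i := by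
    intro σ; simp [Perm4Aux.Ev, permVec]
  rw [Perm4Aux.CExp_eq_avg _ _ hEc, Perm4Aux.CExp_eq_avg _ _ hEb]
  simp only [permVec]
  have hne : (Perm4Aux.Ev c ∅ id I x).Nonempty := Perm4Aux.pos_nonempty hEc hposZ
  set cs : Finset (Fin n) → Fin n → ℝ := fun s j => if j ∈ s then b j else c j with hcs
  suffices h : ∀ s, (Perm4Aux.Ev (cs s) ∅ id I x).Nonempty ∧
      (∑ σ ∈ Perm4Aux.Ev c ∅ id I x, φ fun i => c (σ i.1))
          / ((Perm4Aux.Ev c ∅ id I x).card : ℝ)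
        ≤ (∑ σ ∈ Perm4Aux.Ev (cs s) ∅ id I x, φ fun i => cs s (σ i.1))
          / ((Perm4Aux.Ev (cs s) ∅ id I x).card : ℝ) by
    have hu := (h Finset.univ).2
    have hb : cs Finset.univ = b := by funext j; simp [hcs]
    rw [hb] at hu
    exact hu
  intro s
  induction s using Finset.induction with
  | empty =>
      have hc : cs ∅ = c := by funext j; simp [hcs]
      rw [hc]
      exact ⟨hne, le_refl _⟩
  | @insert k s hk ihs =>
      obtain ⟨hne', hle'⟩ := ihs
      have hml := Perm4Aux.ML (cs s) (cs (insert k s)) L x φ hφ I ∅ id id 1 k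
        (Finset.disjoint_empty_left I) hIL (Finset.disjoint_empty_left L)
        (by simp) (by simp)
        (by
          intro w _ hwk
          refine ⟨rfl, ?_⟩
          simp [hcs, Finset.mem_insert, hwk])
        (by
          simp only [hcs, Equiv.Perm.one_apply]
          rw [if_neg hk, if_pos (Finset.mem_insert_self k s)]
          exact hbc k)
        hne'
      exact ⟨hml.1, le_trans hle' hml.2⟩
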